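/- Cheeger-type inequality for hypergraph bipartiteness (hard direction): for any non-zero vector f ∈ ℝ^V, there exist disjoint sets L, R ⊆ V, not both empty, such that β_H(L, R) ≤ √(2·D(f)). In particular, if γ_1 = min_f D(f), then there exist disjoint L, R ⊆ V with β_H(L, R) ≤ √(2·γ_1). -/

import Mathlib

open Finset

/-- The degree of a vertex in a hypergraph `(V, E, w)`: the total weight of the edges
containing it. -/
noncomputable def hDeg {V : Type*} [DecidableEq V]
    (E : Finset (Finset V)) (w : Finset V → ℝ) (v : V) : ℝ :=
  ∑ e ∈ E.filter (fun e => v ∈ e), w e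

/-- The volume of a vertex set in a hypergraph. -/
noncomputable def hVol {V : Type*} [DecidableEq V]
    (E : Finset (Finset V)) (w : Finset V → ℝ) (S : Finset V) : ℝ :=
  ∑ v ∈ S, hDeg E w v

/-- `w(A, B | C)`: the total weight of the hyperedges intersecting both `A` and `B`
and avoiding `C`. -/
noncomputable def hCut {V : Type*} [DecidableEq V]
    (E : Finset (Finset V)) (w : Finset V → ℝ) (A B C : Finset V) : ℝ :=
  ∑ e ∈ E, if (e ∩ A).Nonempty ∧ (e ∩ B).Nonempty ∧ e ∩ C = ∅ then w e else 0

/-- The hypergraph bipartiteness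
`β_H(L, R) = (2w(L | V∖L) + 2w(R | V∖R) + w(L, V∖L | R) + w(R, V∖R | L)) / vol(L ∪ R)`. -/
noncomputable def hBip {V : Type*} [Fintype V] [DecidableEq V]
    (E : Finset (Finset V)) (w : Finset V → ℝ) (L R : Finset V) : ℝ :=
  (2 * hCut E w L L Lᶜ + 2 * hCut E w R R Rᶜ +
      hCut E w L Lᶜ R + hCut E w R Rᶜ L) / hVol E w (L ∪ R)

/-- The maximum of `f` over a finite set (zero on the empty set). -/
noncomputable def fmax {V : Type*} (e : Finset V) (f : V → ℝ) : ℝ :=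
  if h : e.Nonempty then e.sup' h f else 0

/-- The minimum of `f` over a finite set (zero on the empty set). -/
noncomputable def fmin {V : Type*} (e : Finset V) (f : V → ℝ) : ℝ :=
  if h : e.Nonempty then e.inf' h f else 0

/-- The discrepancy ratio of a vector `f` with respect to a hypergraph:
`D(f) = (Σ_e w(e)·(max_{u∈e} f(u) + min_{v∈e} f(v))²) / (Σ_v deg(v)·f(v)²)`. -/
noncomputable def hDisc {V : Type*} [Fintype V] [DecidableEq V]
    (E : Finset (Finset V)) (w : Finset V → ℝ) (f : V → ℝ) : ℝ :=
  (∑ e ∈ E, w e * (fmax e f + fmin e f) ^ 2) / (∑ v, hDeg E w v * f v ^ 2)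

section Key

open MeasureTheory

noncomputable def qInd (c d t : ℝ) : ℝ := Set.indicator (Set.Ioc c d) (fun s => 2*s) t

lemma qInd_apply (c d t : ℝ) : qInd c d t = if c < t ∧ t ≤ d then 2*t else 0 := by
  simp [qInd, Set.indicator_apply, Set.mem_Ioc]

lemma integrable_qInd (c d M : ℝ) :
    MeasureTheory.IntegrableOn (qInd c d) (Set.Ioc (0:ℝ) M) :=
  ((continuous_const.mul continuous_id).integrableOn_Ioc).indicator measurableSet_Ioc

lemma integ_qInd (c d M : ℝ) (hc : 0 ≤ c) (hd : d ≤ M) :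
    ∫ t in Set.Ioc (0:ℝ) M, qInd c d t = if c ≤ d then d^2 - c^2 else 0 := by
  rw [show (fun t => qInd c d t) = Set.indicator (Set.Ioc c d) (fun s => 2*s) from rfl,
    MeasureTheory.setIntegral_indicator measurableSet_Ioc]
  split_ifs with h
  · have hset : Set.Ioc (0:ℝ) M ∩ Set.Ioc c d = Set.Ioc c d :=
      Set.inter_eq_self_of_subset_right (Set.Ioc_subset_Ioc hc hd)
    rw [hset, ← intervalIntegral.integral_of_le h, intervalIntegral.integral_const_mul,
      integral_id]
    ring
  · have : Set.Ioc c d = ∅ := Set.Ioc_eq_empty (fun hlt => h hlt.le)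
    rw [this]
    simp

set_option maxHeartbeats 1000000 in
lemma Tbound (a b : ℝ) (hab : a ≤ b) :
    2*(if (0:ℝ) ≤ -b then (-b)^2 - 0^2 else 0) + 2*(if (0:ℝ) ≤ a then a^2 - 0^2 else 0)
      + (if |b| ≤ -a then (-a)^2 - |b|^2 else 0) + (if |a| ≤ b then b^2 - |a|^2 else 0)
      ≤ |a+b| * (|a|+|b|) := by
  rcases le_or_gt b 0 with hb | hb
  · rw [abs_of_nonpos hb, abs_of_nonpos (hab.trans hb),
      abs_of_nonpos (by linarith : a + b ≤ 0)]
    split_ifs <;> nlinarith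
  · rcases le_or_gt 0 a with ha | ha
    · rw [abs_of_nonneg hb.le, abs_of_nonneg ha, abs_of_nonneg (by linarith : 0 ≤ a + b)]
      split_ifs <;> nlinarith
    · rw [abs_of_pos hb, abs_of_neg ha]
      rcases le_or_gt 0 (a + b) with hc | hc
      · rw [abs_of_nonneg hc]
        split_ifs <;> nlinarith
      · rw [abs_of_neg hc]
        split_ifs <;> nlinarith

lemma integral_pos_aux {g : ℝ → ℝ} {M : ℝ} (hM : 0 < M)
    (hint : MeasureTheory.IntegrableOn g (Set.Ioc 0 M))
    (hpos : ∀ t ∈ Set.Ioc (0:ℝ) M, 0 < g t) :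
    0 < ∫ t in Set.Ioc (0:ℝ) M, g t := by
  have hae : 0 ≤ᵐ[volume.restrict (Set.Ioc (0:ℝ) M)] g :=
    (MeasureTheory.ae_restrict_iff' measurableSet_Ioc).2
      (Filter.Eventually.of_forall fun t ht => (hpos t ht).le)
  rw [MeasureTheory.integral_pos_iff_support_of_nonneg_ae hae hint]
  have hsub : Set.Ioc (0:ℝ) M ⊆ Function.support g := fun t ht => (hpos t ht).ne'
  calc (0:ENNReal) < ENNReal.ofReal M := ENNReal.ofReal_pos.2 hM
    _ = volume.restrict (Set.Ioc (0:ℝ) M) (Set.Ioc (0:ℝ) M) := by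
        rw [MeasureTheory.Measure.restrict_apply_self, Real.volume_Ioc, sub_zero]
    _ ≤ _ := measure_mono hsub

lemma inter_filter_nonempty_iff {V : Type*} [Fintype V] [DecidableEq V] (e : Finset V)
    (p : V → Prop) [DecidablePred p] :
    (e ∩ univ.filter p).Nonempty ↔ ∃ v ∈ e, p v := by
  simp [Finset.Nonempty, Finset.mem_inter]

lemma inter_filter_eq_empty_iff {V : Type*} [Fintype V] [DecidableEq V] (e : Finset V)
    (p : V → Prop) [DecidablePred p] :
    e ∩ univ.filter p = ∅ ↔ ∀ v ∈ e, ¬ p v := by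
  simp [Finset.eq_empty_iff_forall_notMem]

lemma inter_filter_compl_nonempty_iff {V : Type*} [Fintype V] [DecidableEq V] (e : Finset V)
    (p : V → Prop) [DecidablePred p] :
    (e ∩ (univ.filter p)ᶜ).Nonempty ↔ ∃ v ∈ e, ¬ p v := by
  simp [Finset.Nonempty, Finset.mem_inter]

lemma inter_filter_compl_eq_empty_iff {V : Type*} [Fintype V] [DecidableEq V] (e : Finset V)
    (p : V → Prop) [DecidablePred p] :
    e ∩ (univ.filter p)ᶜ = ∅ ↔ ∀ v ∈ e, p v := by
  simp [Finset.eq_empty_iff_forall_notMem]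

lemma cheeger_key {V : Type*} [Fintype V] [DecidableEq V]
    (E : Finset (Finset V)) (w : Finset V → ℝ)
    (hw : ∀ e ∈ E, 0 ≤ w e) (hrank : ∀ e ∈ E, 2 ≤ e.card)
    (hdegpos : ∀ v, 0 < hDeg E w v) (f : V → ℝ) (hf : f ≠ 0) :
    ∃ L R : Finset V, Disjoint L R ∧ (L ∪ R).Nonempty ∧
      hBip E w L R ≤ Real.sqrt (2 * hDisc E w f) := by
  classical
  obtain ⟨v0, hv0⟩ : ∃ v, f v ≠ 0 := by
    by_contra h; push_neg at h; exact hf (funext h)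
  have hVne : (univ : Finset V).Nonempty := ⟨v0, mem_univ v0⟩
  set M : ℝ := univ.sup' hVne (fun v => |f v|) with hM
  have hMv : ∀ v : V, |f v| ≤ M := by
    intro v; rw [hM]; exact Finset.le_sup' (fun v => |f v|) (mem_univ v)
  have hMpos : 0 < M := lt_of_lt_of_le (abs_pos.2 hv0) (hMv v0)
  set dnm : ℝ := ∑ v, hDeg E w v * f v ^ 2 with hdnm
  have hdnmpos : 0 < dnm := by
    refine Finset.sum_pos' (fun v _ => mul_nonneg (hdegpos v).le (sq_nonneg _)) ⟨v0, mem_univ v0, ?_⟩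
    exact mul_pos (hdegpos v0) (lt_of_le_of_ne (sq_nonneg _) (Ne.symm (pow_ne_zero 2 hv0)))
  set numD : ℝ := ∑ e ∈ E, w e * (fmax e f + fmin e f) ^ 2 with hnumD
  have hnumDnn : 0 ≤ numD :=
    Finset.sum_nonneg fun e he => mul_nonneg (hw e he) (sq_nonneg _)
  have hDisc_eq : hDisc E w f = numD / dnm := rfl
  set K : ℝ := Real.sqrt (2 * hDisc E w f) with hK
  have hne : ∀ e ∈ E, e.Nonempty := fun e he =>
    Finset.card_pos.1 (by have := hrank e he; omega)
  have hfmax : ∀ (e : Finset V) (h : e.Nonempty), fmax e f = e.sup' h f := fun e h => dif_pos h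
  have hfmin : ∀ (e : Finset V) (h : e.Nonempty), fmin e f = e.inf' h f := fun e h => dif_pos h
  have hab : ∀ e ∈ E, fmin e f ≤ fmax e f := by
    intro e he
    obtain ⟨x, hx⟩ := hne e he
    rw [hfmin e (hne e he), hfmax e (hne e he)]
    exact le_trans (Finset.inf'_le f hx) (Finset.le_sup' f hx)
  have hbM : ∀ e ∈ E, |fmax e f| ≤ M := by
    intro e he
    obtain ⟨u, hu, hbu⟩ := Finset.exists_mem_eq_sup' (hne e he) f
    rw [hfmax e (hne e he), hbu]; exact hMv u
  have haM : ∀ e ∈ E, |fmin e f| ≤ M := by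
    intro e he
    obtain ⟨u, hu, hau⟩ := Finset.exists_mem_eq_inf' (hne e he) f
    rw [hfmin e (hne e he), hau]; exact hMv u
  -- sum swap
  have hswap : dnm = ∑ e ∈ E, w e * ∑ v ∈ e, f v ^ 2 := by
    rw [hdnm]
    simp only [hDeg, Finset.sum_filter, Finset.sum_mul]
    rw [Finset.sum_comm]
    refine Finset.sum_congr rfl fun e he => ?_
    simp only [ite_mul, zero_mul, Finset.sum_ite_mem, Finset.univ_inter, Finset.mul_sum]
  -- two attainers
  have hattain : ∀ e ∈ E, (fmax e f)^2 + (fmin e f)^2 ≤ ∑ v ∈ e, f v ^ 2 := by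
    intro e he
    have hcard : 1 < e.card := by have := hrank e he; omega
    have hne_e := hne e he
    have pair_le : ∀ x y : V, x ∈ e → y ∈ e → x ≠ y →
        f x ^ 2 + f y ^ 2 ≤ ∑ v ∈ e, f v ^ 2 := by
      intro x y hx hy hxy
      have hsub : ({x, y} : Finset V) ⊆ e := by
        intro z hz
        rcases Finset.mem_insert.1 hz with rfl | hz
        · exact hx
        · rw [Finset.mem_singleton.1 hz]; exact hy
      calc f x ^ 2 + f y ^ 2 = ∑ v ∈ ({x, y} : Finset V), f v ^ 2 := by
            rw [Finset.sum_pair hxy]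
        _ ≤ _ := Finset.sum_le_sum_of_subset_of_nonneg hsub (fun v _ _ => sq_nonneg _)
    rw [hfmax e hne_e, hfmin e hne_e]
    obtain ⟨u, hu, hbu⟩ := Finset.exists_mem_eq_sup' hne_e f
    obtain ⟨u', hu', hau⟩ := Finset.exists_mem_eq_inf' hne_e f
    by_cases huu : u = u'
    · obtain ⟨x, hx, hxu⟩ := Finset.exists_mem_ne hcard u
      have hss : e.inf' hne_e f = e.sup' hne_e f := by rw [hbu, hau, huu]
      have hfx : f x = e.inf' hne_e f := by
        have h1 : f x ≤ e.sup' hne_e f := Finset.le_sup' f hx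
        have h2 : e.inf' hne_e f ≤ f x := Finset.inf'_le f hx
        rw [hss]; linarith
      have := pair_le u x hu hx (Ne.symm hxu)
      calc e.sup' hne_e f ^ 2 + e.inf' hne_e f ^ 2 = f u ^ 2 + f x ^ 2 := by
            rw [hbu, ← hfx]
        _ ≤ _ := this
    · have := pair_le u u' hu hu' huu
      calc e.sup' hne_e f ^ 2 + e.inf' hne_e f ^ 2 = f u ^ 2 + f u' ^ 2 := by
            rw [hbu, hau]
        _ ≤ _ := this
  -- Cauchy-Schwarz chain
  set S : ℝ := ∑ e ∈ E, w e * (|fmin e f + fmax e f| * (|fmin e f| + |fmax e f|)) with hS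
  have hSnn : 0 ≤ S := Finset.sum_nonneg fun e he => mul_nonneg (hw e he)
    (mul_nonneg (abs_nonneg _) (add_nonneg (abs_nonneg _) (abs_nonneg _)))
  have hCS : S ≤ K * dnm := by
    set Y : ℝ := ∑ e ∈ E, w e * (|fmin e f| + |fmax e f|) ^ 2 with hY
    have hYnn : 0 ≤ Y := Finset.sum_nonneg fun e he => mul_nonneg (hw e he) (sq_nonneg _)
    have hYle : Y ≤ 2 * dnm := by
      rw [hY, hswap, Finset.mul_sum]
      refine Finset.sum_le_sum fun e he => ?_
      have h1 := hattain e he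
      have h2 := hw e he
      have h3 : (|fmin e f| + |fmax e f|) ^ 2 ≤ 2 * ((fmax e f) ^ 2 + (fmin e f) ^ 2) := by
        nlinarith [sq_abs (fmin e f), sq_abs (fmax e f),
          sq_nonneg (|fmin e f| - |fmax e f|)]
      calc w e * (|fmin e f| + |fmax e f|) ^ 2
          ≤ w e * (2 * ((fmax e f) ^ 2 + (fmin e f) ^ 2)) :=
            mul_le_mul_of_nonneg_left h3 h2
        _ ≤ w e * (2 * ∑ v ∈ e, f v ^ 2) :=
            mul_le_mul_of_nonneg_left (by linarith) h2
        _ = 2 * (w e * ∑ v ∈ e, f v ^ 2) := by ring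
    have hX : ∑ e ∈ E, (Real.sqrt (w e) * |fmin e f + fmax e f|) ^ 2 = numD := by
      rw [hnumD]
      refine Finset.sum_congr rfl fun e he => ?_
      rw [mul_pow, Real.sq_sqrt (hw e he), sq_abs]
      ring
    have hYeq : ∑ e ∈ E, (Real.sqrt (w e) * (|fmin e f| + |fmax e f|)) ^ 2 = Y := by
      rw [hY]
      refine Finset.sum_congr rfl fun e he => ?_
      rw [mul_pow, Real.sq_sqrt (hw e he)]
    have hSe : S = ∑ e ∈ E, (Real.sqrt (w e) * |fmin e f + fmax e f|) *
        (Real.sqrt (w e) * (|fmin e f| + |fmax e f|)) := by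
      rw [hS]
      refine Finset.sum_congr rfl fun e he => ?_
      rw [show ∀ x y z : ℝ, (x * y) * (x * z) = (x * x) * (y * z) from fun x y z => by ring,
        Real.mul_self_sqrt (hw e he)]
    have hcs2 : S ^ 2 ≤ numD * Y := by
      rw [hSe, ← hX, ← hYeq]
      exact Finset.sum_mul_sq_le_sq_mul_sq E _ _
    have h5 : S ≤ Real.sqrt (numD * (2 * dnm)) := by
      have h6 : S ≤ Real.sqrt (numD * Y) := by
        calc S = Real.sqrt (S ^ 2) := (Real.sqrt_sq hSnn).symm
          _ ≤ _ := Real.sqrt_le_sqrt hcs2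
      refine h6.trans (Real.sqrt_le_sqrt ?_)
      exact mul_le_mul_of_nonneg_left hYle hnumDnn
    have hKd : Real.sqrt (numD * (2 * dnm)) = K * dnm := by
      have harith : numD * (2 * dnm) = (2 * (numD / dnm)) * dnm ^ 2 := by
        field_simp
      rw [hK, hDisc_eq, harith, Real.sqrt_mul
        (mul_nonneg (by norm_num) (div_nonneg hnumDnn hdnmpos.le)) (dnm ^ 2),
        Real.sqrt_sq hdnmpos.le]
    linarith [h5, hKd.le, hKd.ge]
  -- integral machinery
  set NI : ℝ → ℝ := fun t => ∑ e ∈ E, w e *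
    (2 * qInd 0 (-(fmax e f)) t + 2 * qInd 0 (fmin e f) t +
      qInd |fmax e f| (-(fmin e f)) t + qInd |fmin e f| (fmax e f) t) with hNI
  set VI : ℝ → ℝ := fun t => ∑ v : V, hDeg E w v * qInd 0 |f v| t with hVI
  have hintE : ∀ e ∈ E, MeasureTheory.Integrable (fun t =>
      w e * (2 * qInd 0 (-(fmax e f)) t + 2 * qInd 0 (fmin e f) t +
        qInd |fmax e f| (-(fmin e f)) t + qInd |fmin e f| (fmax e f) t))
      (MeasureTheory.volume.restrict (Set.Ioc (0:ℝ) M)) := by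
    intro e he
    exact (((((integrable_qInd 0 (-(fmax e f)) M).const_mul 2).add
      ((integrable_qInd 0 (fmin e f) M).const_mul 2)).add
      (integrable_qInd |fmax e f| (-(fmin e f)) M)).add
      (integrable_qInd |fmin e f| (fmax e f) M)).const_mul (w e)
  have hintV : ∀ v : V, MeasureTheory.Integrable (fun t => hDeg E w v * qInd 0 |f v| t)
      (MeasureTheory.volume.restrict (Set.Ioc (0:ℝ) M)) := fun v =>
    (integrable_qInd 0 |f v| M).const_mul _
  have hNIint : MeasureTheory.IntegrableOn NI (Set.Ioc (0:ℝ) M) := by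
    rw [hNI]
    exact MeasureTheory.integrable_finset_sum E hintE
  have hVIint : MeasureTheory.IntegrableOn VI (Set.Ioc (0:ℝ) M) := by
    rw [hVI]
    exact MeasureTheory.integrable_finset_sum Finset.univ (fun v _ => hintV v)
  have hVIval : ∫ t in Set.Ioc (0:ℝ) M, VI t = dnm := by
    simp only [hVI]
    rw [MeasureTheory.integral_finset_sum Finset.univ (fun v _ => hintV v), hdnm]
    refine Finset.sum_congr rfl fun v _ => ?_
    rw [MeasureTheory.integral_const_mul, integ_qInd 0 |f v| M le_rfl (hMv v),
      if_pos (abs_nonneg _), sq_abs]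
    ring
  have hNIval : (∫ t in Set.Ioc (0:ℝ) M, NI t) ≤ S := by
    have h0 : ∫ t in Set.Ioc (0:ℝ) M, NI t = ∑ e ∈ E, w e *
        (2 * (if (0:ℝ) ≤ -(fmax e f) then (-(fmax e f)) ^ 2 - 0 ^ 2 else 0) +
         2 * (if (0:ℝ) ≤ fmin e f then (fmin e f) ^ 2 - 0 ^ 2 else 0) +
         (if |fmax e f| ≤ -(fmin e f) then (-(fmin e f)) ^ 2 - |fmax e f| ^ 2 else 0) +
         (if |fmin e f| ≤ fmax e f then (fmax e f) ^ 2 - |fmin e f| ^ 2 else 0)) := by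
      simp only [hNI]
      rw [MeasureTheory.integral_finset_sum E hintE]
      refine Finset.sum_congr rfl fun e he => ?_
      have i1 : MeasureTheory.Integrable (fun t => 2 * qInd 0 (-(fmax e f)) t)
          (MeasureTheory.volume.restrict (Set.Ioc (0:ℝ) M)) :=
        (integrable_qInd 0 (-(fmax e f)) M).const_mul (2:ℝ)
      have i2 : MeasureTheory.Integrable (fun t => 2 * qInd 0 (fmin e f) t)
          (MeasureTheory.volume.restrict (Set.Ioc (0:ℝ) M)) :=
        (integrable_qInd 0 (fmin e f) M).const_mul (2:ℝ)
      have i3 : MeasureTheory.Integrable (fun t => qInd |fmax e f| (-(fmin e f)) t)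
          (MeasureTheory.volume.restrict (Set.Ioc (0:ℝ) M)) :=
        integrable_qInd |fmax e f| (-(fmin e f)) M
      have i4 : MeasureTheory.Integrable (fun t => qInd |fmin e f| (fmax e f) t)
          (MeasureTheory.volume.restrict (Set.Ioc (0:ℝ) M)) :=
        integrable_qInd |fmin e f| (fmax e f) M
      have i12 : MeasureTheory.Integrable
          (fun t => 2 * qInd 0 (-(fmax e f)) t + 2 * qInd 0 (fmin e f) t)
          (MeasureTheory.volume.restrict (Set.Ioc (0:ℝ) M)) := i1.add i2
      have i123 : MeasureTheory.Integrable
          (fun t => 2 * qInd 0 (-(fmax e f)) t + 2 * qInd 0 (fmin e f) t +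
            qInd |fmax e f| (-(fmin e f)) t)
          (MeasureTheory.volume.restrict (Set.Ioc (0:ℝ) M)) := i12.add i3
      rw [MeasureTheory.integral_const_mul,
        MeasureTheory.integral_add i123 i4,
        MeasureTheory.integral_add i12 i3,
        MeasureTheory.integral_add i1 i2,
        MeasureTheory.integral_const_mul, MeasureTheory.integral_const_mul,
        integ_qInd 0 (-(fmax e f)) M le_rfl ((neg_le_abs _).trans (hbM e he)),
        integ_qInd 0 (fmin e f) M le_rfl ((le_abs_self _).trans (haM e he)),
        integ_qInd |fmax e f| (-(fmin e f)) M (abs_nonneg _) ((neg_le_abs _).trans (haM e he)),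
        integ_qInd |fmin e f| (fmax e f) M (abs_nonneg _) ((le_abs_self _).trans (hbM e he))]
    rw [h0, hS]
    refine Finset.sum_le_sum fun e he => ?_
    exact mul_le_mul_of_nonneg_left (Tbound (fmin e f) (fmax e f) (hab e he)) (hw e he)
  set Lf : ℝ → Finset V := fun t => univ.filter (fun v => f v ≤ -t) with hLf
  set Rf : ℝ → Finset V := fun t => univ.filter (fun v => t ≤ f v) with hRf
  set Num : ℝ → ℝ := fun t => 2 * hCut E w (Lf t) (Lf t) (Lf t)ᶜ +
    2 * hCut E w (Rf t) (Rf t) (Rf t)ᶜ +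
    hCut E w (Lf t) (Lf t)ᶜ (Rf t) + hCut E w (Rf t) (Rf t)ᶜ (Lf t) with hNum
  have hNumEq : ∀ t ∈ Set.Ioc (0:ℝ) M, Num t * (2*t) = NI t := by
    intro t ht
    obtain ⟨ht0, htM⟩ := ht
    simp only [hNum, hNI, hCut, Finset.mul_sum]
    rw [← Finset.sum_add_distrib, ← Finset.sum_add_distrib, ← Finset.sum_add_distrib,
      Finset.sum_mul]
    refine Finset.sum_congr rfl fun e he => ?_
    have hne_e := hne e he
    have hb := hfmax e hne_e
    have ha := hfmin e hne_e
    have h1 : ((e ∩ Lf t).Nonempty ∧ (e ∩ Lf t).Nonempty ∧ e ∩ (Lf t)ᶜ = ∅) ↔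
        (0 < t ∧ t ≤ -(fmax e f)) := by
      rw [hb]
      simp only [hLf]
      rw [inter_filter_nonempty_iff, inter_filter_compl_eq_empty_iff]
      constructor
      · rintro ⟨-, -, hall⟩
        refine ⟨ht0, ?_⟩
        have := Finset.sup'_le hne_e f hall
        linarith
      · rintro ⟨-, hle⟩
        have hall : ∀ v ∈ e, f v ≤ -t := fun v hv =>
          le_trans (Finset.le_sup' f hv) (by linarith)
        obtain ⟨x, hx⟩ := hne_e
        exact ⟨⟨x, hx, hall x hx⟩, ⟨x, hx, hall x hx⟩, hall⟩
    have h2 : ((e ∩ Rf t).Nonempty ∧ (e ∩ Rf t).Nonempty ∧ e ∩ (Rf t)ᶜ = ∅) ↔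
        (0 < t ∧ t ≤ fmin e f) := by
      rw [ha]
      simp only [hRf]
      rw [inter_filter_nonempty_iff, inter_filter_compl_eq_empty_iff]
      constructor
      · rintro ⟨-, -, hall⟩
        exact ⟨ht0, Finset.le_inf' hne_e f hall⟩
      · rintro ⟨-, hle⟩
        have hall : ∀ v ∈ e, t ≤ f v := fun v hv =>
          le_trans hle (Finset.inf'_le f hv)
        obtain ⟨x, hx⟩ := hne_e
        exact ⟨⟨x, hx, hall x hx⟩, ⟨x, hx, hall x hx⟩, hall⟩
    have h3 : ((e ∩ Lf t).Nonempty ∧ (e ∩ (Lf t)ᶜ).Nonempty ∧ e ∩ Rf t = ∅) ↔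
        (|fmax e f| < t ∧ t ≤ -(fmin e f)) := by
      rw [ha, hb]
      simp only [hLf, hRf]
      rw [inter_filter_nonempty_iff, inter_filter_compl_nonempty_iff,
        inter_filter_eq_empty_iff]
      constructor
      · rintro ⟨⟨v1, hv1, hle1⟩, ⟨v2, hv2, hlt2⟩, hall⟩
        have h01 : -t < e.sup' hne_e f := lt_of_lt_of_le (not_le.1 hlt2) (Finset.le_sup' f hv2)
        have h02 : e.sup' hne_e f < t := by
          rw [Finset.sup'_lt_iff]
          exact fun v hv => not_le.1 (hall v hv)
        have h03 : e.inf' hne_e f ≤ -t := le_trans (Finset.inf'_le f hv1) hle1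
        exact ⟨abs_lt.2 ⟨h01, h02⟩, by linarith⟩
      · rintro ⟨habs, hta⟩
        obtain ⟨h01, h02⟩ := abs_lt.1 habs
        obtain ⟨u, hu, hbu⟩ := Finset.exists_mem_eq_sup' hne_e f
        obtain ⟨u', hu', hau⟩ := Finset.exists_mem_eq_inf' hne_e f
        refine ⟨⟨u', hu', ?_⟩, ⟨u, hu, not_le.2 ?_⟩,
          fun v hv => not_le.2 (lt_of_le_of_lt (Finset.le_sup' f hv) h02)⟩
        · rw [← hau]; linarith
        · rw [← hbu]; linarith
    have h4 : ((e ∩ Rf t).Nonempty ∧ (e ∩ (Rf t)ᶜ).Nonempty ∧ e ∩ Lf t = ∅) ↔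
        (|fmin e f| < t ∧ t ≤ fmax e f) := by
      rw [ha, hb]
      simp only [hLf, hRf]
      rw [inter_filter_nonempty_iff, inter_filter_compl_nonempty_iff,
        inter_filter_eq_empty_iff]
      constructor
      · rintro ⟨⟨v1, hv1, hle1⟩, ⟨v2, hv2, hlt2⟩, hall⟩
        have h01 : -t < e.inf' hne_e f := by
          rw [Finset.lt_inf'_iff]
          exact fun v hv => not_le.1 (hall v hv)
        have h02 : e.inf' hne_e f < t := lt_of_le_of_lt (Finset.inf'_le f hv2) (not_le.1 hlt2)
        have h03 : t ≤ e.sup' hne_e f := le_trans hle1 (Finset.le_sup' f hv1)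
        exact ⟨abs_lt.2 ⟨h01, h02⟩, h03⟩
      · rintro ⟨habs, htb⟩
        obtain ⟨h01, h02⟩ := abs_lt.1 habs
        obtain ⟨u, hu, hbu⟩ := Finset.exists_mem_eq_sup' hne_e f
        obtain ⟨u', hu', hau⟩ := Finset.exists_mem_eq_inf' hne_e f
        refine ⟨⟨u, hu, ?_⟩, ⟨u', hu', not_le.2 ?_⟩,
          fun v hv => not_le.2 (lt_of_lt_of_le h01 (Finset.inf'_le f hv))⟩
        · rw [← hbu]; linarith
        · rw [← hau]; linarith
    rw [qInd_apply, qInd_apply, qInd_apply, qInd_apply]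
    simp only [h1, h2, h3, h4]
    split_ifs <;> ring
  have hVolEq : ∀ t ∈ Set.Ioc (0:ℝ) M, hVol E w (Lf t ∪ Rf t) * (2*t) = VI t := by
    intro t ht
    simp only [hVI, hVol, hLf, hRf, ← Finset.filter_or]
    rw [Finset.sum_filter, Finset.sum_mul]
    refine Finset.sum_congr rfl fun v _ => ?_
    rw [qInd_apply]
    by_cases hv : f v ≤ -t ∨ t ≤ f v
    · have hc : 0 < t ∧ t ≤ |f v| := by
        refine ⟨ht.1, le_abs.2 ?_⟩
        rcases hv with h | h
        · exact Or.inr (by linarith)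
        · exact Or.inl h
      rw [if_pos hv, if_pos hc]
    · have hc : ¬ (0 < t ∧ t ≤ |f v|) := by
        rintro ⟨-, habs⟩
        rcases le_abs.1 habs with h | h
        · exact hv (Or.inr h)
        · exact hv (Or.inl (by linarith))
      rw [if_neg hv, if_neg hc, zero_mul, mul_zero]
  have hex : ∃ t ∈ Set.Ioc (0:ℝ) M, Num t ≤ K * hVol E w (Lf t ∪ Rf t) := by
    by_contra hcon
    push_neg at hcon
    have hpos : ∀ t ∈ Set.Ioc (0:ℝ) M, 0 < NI t - K * VI t := by
      intro t ht
      rw [← hNumEq t ht, ← hVolEq t ht]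
      have h1 := hcon t ht
      have h2 := ht.1
      nlinarith
    have hIpos : 0 < ∫ t in Set.Ioc (0:ℝ) M, (NI t - K * VI t) :=
      integral_pos_aux hMpos (hNIint.sub (hVIint.const_mul K)) hpos
    rw [MeasureTheory.integral_sub hNIint (hVIint.const_mul K),
      MeasureTheory.integral_const_mul, hVIval] at hIpos
    have := le_trans hNIval hCS
    linarith
  obtain ⟨t, ht, hble⟩ := hex
  obtain ⟨v1, hv1mem, hv1⟩ := Finset.exists_mem_eq_sup' hVne (fun v => |f v|)
  have hv1in : v1 ∈ Lf t ∪ Rf t := by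
    rw [Finset.mem_union, hLf, hRf]
    simp only [Finset.mem_filter, Finset.mem_univ, true_and]
    have : t ≤ |f v1| := by rw [← hv1]; exact ht.2
    rcases le_abs.1 this with h | h
    · right; exact h
    · left; linarith
  have hVlpos : 0 < hVol E w (Lf t ∪ Rf t) :=
    Finset.sum_pos (fun v _ => hdegpos v) ⟨v1, hv1in⟩
  refine ⟨Lf t, Rf t, ?_, ⟨v1, hv1in⟩, ?_⟩
  · rw [Finset.disjoint_left]
    intro v hv1' hv2'
    rw [hLf] at hv1'
    rw [hRf] at hv2'
    simp only [Finset.mem_filter, Finset.mem_univ, true_and] at hv1' hv2'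
    have := ht.1
    linarith
  · have hbipeq : hBip E w (Lf t) (Rf t) = Num t / hVol E w (Lf t ∪ Rf t) := by
      rw [hNum]; rfl
    rw [hbipeq, div_le_iff₀ hVlpos]
    nlinarith [hble]

end Key

/-- **Cheeger-type inequality for hypergraph bipartiteness, hard direction**
(Lemma 7.10): every non-zero vector `f` yields disjoint sets `L, R`, not both empty, with
`β_H(L, R) ≤ √(2·D(f))`; in particular, if `γ₁` is the minimum of the discrepancy ratio
over non-zero vectors, then there are disjoint `L, R` with `β_H(L, R) ≤ √(2·γ₁)`. -/
theorem hypergraph_cheeger_hard_direction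
    {V : Type*} [Fintype V] [DecidableEq V]
    (E : Finset (Finset V)) (w : Finset V → ℝ)
    (hw : ∀ e ∈ E, 0 ≤ w e)
    (hrank : ∀ e ∈ E, 2 ≤ e.card)
    (hdegpos : ∀ v, 0 < hDeg E w v) :
    (∀ f : V → ℝ, f ≠ 0 →
      ∃ L R : Finset V, Disjoint L R ∧ (L ∪ R).Nonempty ∧
        hBip E w L R ≤ Real.sqrt (2 * hDisc E w f)) ∧
    (∀ gamma1 : ℝ, (∀ f : V → ℝ, f ≠ 0 → gamma1 ≤ hDisc E w f) →
      (∃ f : V → ℝ, f ≠ 0 ∧ hDisc E w f = gamma1) →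
      ∃ L R : Finset V, Disjoint L R ∧ (L ∪ R).Nonempty ∧
        hBip E w L R ≤ Real.sqrt (2 * gamma1)) := by
  constructor
  · intro f hf
    exact cheeger_key E w hw hrank hdegpos f hf
  · intro gamma1 hmin hex
    obtain ⟨f, hf, hd⟩ := hex
    rw [← hd]
    exact cheeger_key E w hw hrank hdegpos f hf
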